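/- arXiv:1309.6587 — 2 statements merged into one kernel-verified Lean document; each statement's English description precedes it below -/
import Mathlib

section
/- Let K be a field, and consider the formal power series ring K[[y₁,…,yₙ]]. Let f₁,…,f_p (p ≤ n) be power series of the form f_i = y_i + g_i where each g_i has zero constant term and depends only on the variables y_{p+1},…,yₙ (i.e., g_i ∈ K[[y_{p+1},…,yₙ]] with g_i(0) = 0). Then for every f ∈ K[[y₁,…,yₙ]] there exist q₁,…,q_p ∈ K[[y₁,…,yₙ]] and a unique r ∈ K[[y_{p+1},…,yₙ]] such that f = Σ_{i=1}^p q_i f_i + r. -/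
open MvPowerSeries Finsupp


/-- `f ∈ K[[y₁,…,yₙ]]` depends only on the parametric variables
`y_{p+1},…,yₙ` (indices `≥ p`): every coefficient of a monomial involving a
variable of index `< p` vanishes. -/
def LateOnly (K : Type) [CommSemiring K] (n p : ℕ)
    (f : MvPowerSeries (Fin n) K) : Prop :=
  ∀ d : Fin n →₀ ℕ, (∃ j : Fin n, j.val < p ∧ d j ≠ 0) →
    MvPowerSeries.coeff d f = 0

namespace SW

variable {K : Type} [CommRing K] {n p : ℕ}

/-- `d` is a "late" monomial: all early entries vanish. -/
def LateM (p : ℕ) (d : Fin n →₀ ℕ) : Prop := ∀ j : Fin n, j.val < p → d j = 0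

noncomputable local instance : ∀ (d : Fin n →₀ ℕ), Decidable (LateM p d) :=
  fun _ => Classical.dec _

/-- total degree -/
def usum (d : Fin n →₀ ℕ) : ℕ := d.sum fun _ m => m

/-- late degree -/
def ldeg (p : ℕ) (d : Fin n →₀ ℕ) : ℕ := d.sum fun j m => if p ≤ j.val then m else 0

def asum {p : ℕ} (α : Fin p →₀ ℕ) : ℕ := α.sum fun _ m => m

lemma usum_add (u v : Fin n →₀ ℕ) : usum (u + v) = usum u + usum v :=
  Finsupp.sum_add_index' (fun _ => rfl) (fun _ _ _ => rfl)

lemma ldeg_add (u v : Fin n →₀ ℕ) : ldeg p (u + v) = ldeg p u + ldeg p v :=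
  Finsupp.sum_add_index' (fun _ => by simp) (fun a b c => by by_cases h : p ≤ a.val <;> simp [h])

lemma asum_add {p : ℕ} (u v : Fin p →₀ ℕ) : asum (u + v) = asum u + asum v :=
  Finsupp.sum_add_index' (fun _ => rfl) (fun _ _ _ => rfl)

lemma ldeg_le_usum (d : Fin n →₀ ℕ) : ldeg p d ≤ usum d := by
  refine Finset.sum_le_sum fun j _ => ?_
  by_cases h : p ≤ j.val <;> simp [h]

lemma ldeg_mono {u d : Fin n →₀ ℕ} (h : u ≤ d) : ldeg p u ≤ ldeg p d := by
  obtain ⟨c, rfl⟩ := le_iff_exists_add.mp h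
  rw [ldeg_add]; omega

lemma usum_pos {u : Fin n →₀ ℕ} (h : u ≠ 0) : 1 ≤ usum u := by
  obtain ⟨j, hj⟩ := Finsupp.support_nonempty_iff.mpr h
  have h1 : 1 ≤ u j := Nat.one_le_iff_ne_zero.mpr (Finsupp.mem_support_iff.mp hj)
  calc 1 ≤ u j := h1
    _ ≤ ∑ j ∈ u.support, u j := Finset.single_le_sum (f := fun j => u j) (fun _ _ => Nat.zero_le _) hj
    _ = usum u := rfl

lemma asum_pos {α : Fin p →₀ ℕ} (h : α ≠ 0) : 1 ≤ asum α := by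
  obtain ⟨j, hj⟩ := Finsupp.support_nonempty_iff.mpr h
  have h1 : 1 ≤ α j := Nat.one_le_iff_ne_zero.mpr (Finsupp.mem_support_iff.mp hj)
  calc 1 ≤ α j := h1
    _ ≤ ∑ j ∈ α.support, α j := Finset.single_le_sum (f := fun j => α j) (fun _ _ => Nat.zero_le _) hj
    _ = asum α := rfl

lemma le_asum {α : Fin p →₀ ℕ} (i : Fin p) : α i ≤ asum α := by
  by_cases h : α i = 0
  · simp [h]
  · calc α i ≤ ∑ j ∈ α.support, α j := Finset.single_le_sum (f := fun j => α j) (fun _ _ => Nat.zero_le _) (Finsupp.mem_support_iff.mpr h)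
      _ = asum α := rfl

/-- coefficient of a series at a late monomial involving `LateOnly` series vanishing -/
lemma lateOnly_iff {f : MvPowerSeries (Fin n) K} :
    LateOnly K n p f ↔ ∀ d : Fin n →₀ ℕ, ¬ LateM p d → coeff d f = 0 := by
  unfold LateOnly LateM
  constructor
  · intro h d hd
    push_neg at hd
    obtain ⟨j, hj1, hj2⟩ := hd
    exact h d ⟨j, hj1, hj2⟩
  · intro h d hd
    obtain ⟨j, hj1, hj2⟩ := hd
    exact h d (by push_neg; exact ⟨j, hj1, hj2⟩)

lemma lateM_not_iff {d : Fin n →₀ ℕ} :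
    ¬ LateM p d ↔ ∃ j : Fin n, j.val < p ∧ d j ≠ 0 := by
  unfold LateM; push_neg; rfl

/-- late part -/
noncomputable def Lop (p : ℕ) (h : MvPowerSeries (Fin n) K) : MvPowerSeries (Fin n) K :=
  fun d => if LateM p d then coeff d h else 0

noncomputable def Qop (hp : p ≤ n) (i : Fin p) (h : MvPowerSeries (Fin n) K) :
    MvPowerSeries (Fin n) K :=
  fun d => if ∀ j : Fin p, j < i → d (Fin.castLE hp j) = 0
           then coeff (d + Finsupp.single (Fin.castLE hp i) 1) h else 0

lemma coeff_Lop (h : MvPowerSeries (Fin n) K) (d : Fin n →₀ ℕ) :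
    coeff d (Lop p h) = if LateM p d then coeff d h else 0 := by
  rw [coeff_apply]; rfl

lemma coeff_Qop (hp : p ≤ n) (i : Fin p) (h : MvPowerSeries (Fin n) K) (d : Fin n →₀ ℕ) :
    coeff d (Qop hp i h) = if ∀ j : Fin p, j < i → d (Fin.castLE hp j) = 0
      then coeff (d + Finsupp.single (Fin.castLE hp i) 1) h else 0 := by
  rw [coeff_apply]; rfl

lemma coeff_mul_X' (φ : MvPowerSeries (Fin n) K) (s : Fin n) (d : Fin n →₀ ℕ) :
    coeff d (φ * X s) =
      if Finsupp.single s 1 ≤ d then coeff (d - Finsupp.single s 1) φ else 0 := by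
  rw [X, coeff_mul_monomial]
  split_ifs <;> simp

/-- the canonical division identity -/
lemma div_id (hp : p ≤ n) (h : MvPowerSeries (Fin n) K) :
    (∑ i : Fin p, Qop hp i h * X (Fin.castLE hp i)) + Lop p h = h := by
  ext d
  rw [map_add, map_sum, coeff_Lop]
  by_cases hd : LateM p d
  · rw [if_pos hd]
    have hz : ∀ i : Fin p, coeff d (Qop hp i h * X (Fin.castLE hp i)) = 0 := by
      intro i
      rw [coeff_mul_X', if_neg]
      rw [Finsupp.single_le_iff]
      have := hd (Fin.castLE hp i) (by simpa using i.isLt)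
      omega
    rw [Finset.sum_congr rfl (fun i _ => hz i), Finset.sum_const_zero, zero_add]
  · rw [if_neg hd]
    have hne : ∃ j : Fin p, d (Fin.castLE hp j) ≠ 0 := by
      rw [lateM_not_iff] at hd
      obtain ⟨j, hj1, hj2⟩ := hd
      refine ⟨⟨j.val, hj1⟩, ?_⟩
      have : Fin.castLE hp ⟨j.val, hj1⟩ = j := Fin.ext rfl
      rwa [this]
    classical
    set F : Finset (Fin p) := Finset.univ.filter (fun j => d (Fin.castLE hp j) ≠ 0) with hF
    have hFne : F.Nonempty := by
      obtain ⟨j, hj⟩ := hne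
      exact ⟨j, by simp [hF, hj]⟩
    set i₀ : Fin p := F.min' hFne with hi₀
    have hi₀mem : d (Fin.castLE hp i₀) ≠ 0 := by
      have := F.min'_mem hFne
      simpa [hF] using this
    have hmin : ∀ j : Fin p, j < i₀ → d (Fin.castLE hp j) = 0 := by
      intro j hj
      by_contra hc
      exact absurd (F.min'_le j (by simp [hF, hc])) (not_le.mpr hj)
    have hinj := Fin.castLE_injective hp
    have hle : Finsupp.single (Fin.castLE hp i₀) 1 ≤ d := by
      rw [Finsupp.single_le_iff]; omega
    rw [Finset.sum_eq_single_of_mem i₀ (Finset.mem_univ _)]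
    · rw [coeff_mul_X', if_pos hle, coeff_Qop, if_pos, tsub_add_cancel_of_le hle, add_zero]
      intro j hj
      rw [Finsupp.tsub_apply, Finsupp.single_apply, if_neg (fun hh => absurd (hinj hh) (by omega)),
        hmin j hj]
      simp
    · intro b _ hb
      rw [coeff_mul_X']
      rcases lt_or_gt_of_ne hb with hlt | hgt
      · rw [if_neg]
        rw [Finsupp.single_le_iff]
        have := hmin b hlt
        omega
      · split_ifs with hsle
        · rw [coeff_Qop, if_neg]
          intro hall
          have := hall i₀ hgt
          rw [Finsupp.tsub_apply, Finsupp.single_apply,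
            if_neg (fun hh => absurd (hinj hh) (by omega))] at this
          omega
        · rfl

lemma ldeg_pos_of_late {v : Fin n →₀ ℕ} (hv : ∀ j : Fin n, j.val < p → v j = 0)
    (hv0 : v ≠ 0) : 1 ≤ ldeg p v := by
  obtain ⟨j, hj⟩ := Finsupp.support_nonempty_iff.mpr hv0
  have hj0 : v j ≠ 0 := Finsupp.mem_support_iff.mp hj
  have hjp : p ≤ j.val := by
    by_contra hc
    exact hj0 (hv j (by omega))
  calc 1 ≤ (if p ≤ j.val then v j else 0) := by rw [if_pos hjp]; omega
    _ ≤ ∑ j ∈ v.support, (if p ≤ (j : Fin n).val then v j else 0) :=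
        Finset.single_le_sum (f := fun j => if p ≤ (j : Fin n).val then v j else 0)
          (fun _ _ => by split_ifs <;> omega) hj
    _ = ldeg p v := rfl

lemma ldeg_single_early (hp : p ≤ n) (i : Fin p) :
    ldeg p (Finsupp.single (Fin.castLE hp i) 1) = 0 := by
  unfold ldeg
  rw [Finsupp.sum_single_index (by simp)]
  rw [if_neg]
  simpa using i.isLt

section Iter

variable (hp : p ≤ n) (g : Fin p → MvPowerSeries (Fin n) K)

noncomputable def iter (f : MvPowerSeries (Fin n) K) : ℕ → MvPowerSeries (Fin n) K
  | 0 => f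
  | (k+1) => - ∑ i : Fin p, Qop hp i (iter f k) * g i

lemma iter_step (f : MvPowerSeries (Fin n) K) (k : ℕ) :
    ((∑ i : Fin p, Qop hp i (iter hp g f k) * (X (Fin.castLE hp i) + g i))
      + Lop p (iter hp g f k)) + iter hp g f (k+1) = iter hp g f k := by
  have h1 : ∑ i : Fin p, Qop hp i (iter hp g f k) * (X (Fin.castLE hp i) + g i)
      = (∑ i : Fin p, Qop hp i (iter hp g f k) * X (Fin.castLE hp i))
        + ∑ i : Fin p, Qop hp i (iter hp g f k) * g i := by
    rw [← Finset.sum_add_distrib]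
    exact Finset.sum_congr rfl fun i _ => mul_add _ _ _
  have h2 := div_id hp (iter hp g f k)
  rw [h1, iter]
  linear_combination h2

lemma iter_order (hlate : ∀ i, LateOnly K n p (g i))
    (h0 : ∀ i, constantCoeff (g i) = 0) (f : MvPowerSeries (Fin n) K) :
    ∀ k d, ldeg p d < k → coeff d (iter hp g f k) = 0 := by
  intro k
  induction k with
  | zero => intro d hd; omega
  | succ k ih =>
    intro d hd
    rw [iter, map_neg, map_sum, neg_eq_zero]
    refine Finset.sum_eq_zero fun i _ => ?_
    classical
    rw [coeff_mul]
    refine Finset.sum_eq_zero fun x hx => ?_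
    have hxd : x.1 + x.2 = d := Finset.HasAntidiagonal.mem_antidiagonal.mp hx
    by_cases hg : coeff x.2 (g i) = 0
    · rw [hg, mul_zero]
    · by_cases hq : coeff x.1 (Qop hp i (iter hp g f k)) = 0
      · rw [hq, zero_mul]
      · exfalso
        -- x.2 is a late, nonzero monomial
        have hvlate : ∀ j : Fin n, j.val < p → x.2 j = 0 := by
          intro j hj
          by_contra hc
          exact hg (hlate i x.2 ⟨j, hj, hc⟩)
        have hv0 : x.2 ≠ 0 := by
          intro hc
          rw [hc] at hg
          exact hg (by rw [coeff_zero_eq_constantCoeff]; exact h0 i)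
        have hv1 : 1 ≤ ldeg p x.2 := ldeg_pos_of_late hvlate hv0
        -- x.1 has high late degree
        have hu : k ≤ ldeg p x.1 := by
          rw [coeff_Qop] at hq
          by_cases hcond : ∀ j : Fin p, j < i → x.1 (Fin.castLE hp j) = 0
          · rw [if_pos hcond] at hq
            by_contra hc
            refine hq (ih _ ?_)
            rw [ldeg_add, ldeg_single_early]
            omega
          · rw [if_neg hcond] at hq; exact absurd rfl hq
        have : ldeg p d = ldeg p x.1 + ldeg p x.2 := by rw [← hxd, ldeg_add]
        omega

noncomputable def qq (f : MvPowerSeries (Fin n) K) (i : Fin p) : MvPowerSeries (Fin n) K :=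
  fun d => ∑ k ∈ Finset.range (ldeg p d + 1), coeff d (Qop hp i (iter hp g f k))

noncomputable def rr (f : MvPowerSeries (Fin n) K) : MvPowerSeries (Fin n) K :=
  fun d => ∑ k ∈ Finset.range (ldeg p d + 1), coeff d (Lop p (iter hp g f k))

variable (hlate : ∀ i, LateOnly K n p (g i))
  (h0 : ∀ i, constantCoeff (g i) = 0)

include hlate h0 in
lemma qq_coeff_ext (f : MvPowerSeries (Fin n) K) (i : Fin p) (d : Fin n →₀ ℕ)
    (m : ℕ) (hm : ldeg p d < m) :
    coeff d (qq hp g f i) = ∑ k ∈ Finset.range m, coeff d (Qop hp i (iter hp g f k)) := by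
  rw [coeff_apply]
  show ∑ k ∈ Finset.range (ldeg p d + 1), coeff d (Qop hp i (iter hp g f k)) = _
  refine Finset.sum_subset (Finset.range_subset_range.mpr (by omega)) ?_
  intro k _ hk
  rw [Finset.mem_range, not_lt] at hk
  rw [coeff_Qop]
  split_ifs with hcond
  · refine iter_order hp g hlate h0 f k _ ?_
    rw [ldeg_add, ldeg_single_early]
    omega
  · rfl

include hlate h0 in
lemma rr_coeff_ext (f : MvPowerSeries (Fin n) K) (d : Fin n →₀ ℕ)
    (m : ℕ) (hm : ldeg p d < m) :
    coeff d (rr hp g f) = ∑ k ∈ Finset.range m, coeff d (Lop p (iter hp g f k)) := by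
  rw [coeff_apply]
  show ∑ k ∈ Finset.range (ldeg p d + 1), coeff d (Lop p (iter hp g f k)) = _
  refine Finset.sum_subset (Finset.range_subset_range.mpr (by omega)) ?_
  intro k _ hk
  rw [Finset.mem_range, not_lt] at hk
  rw [coeff_Lop]
  split_ifs with hcond
  · exact iter_order hp g hlate h0 f k _ (by omega)
  · rfl

lemma rr_late (f : MvPowerSeries (Fin n) K) : LateOnly K n p (rr hp g f) := by
  rw [lateOnly_iff]
  intro d hd
  rw [coeff_apply]
  show ∑ k ∈ Finset.range (ldeg p d + 1), coeff d (Lop p (iter hp g f k)) = 0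
  refine Finset.sum_eq_zero fun k _ => ?_
  rw [coeff_Lop, if_neg hd]

lemma coeff_mul_congr_left (a a' b : MvPowerSeries (Fin n) K) (d : Fin n →₀ ℕ)
    (h : ∀ u ≤ d, coeff u a = coeff u a') :
    coeff d (a * b) = coeff d (a' * b) := by
  classical
  rw [coeff_mul, coeff_mul]
  refine Finset.sum_congr rfl fun x hx => ?_
  have hxd : x.1 + x.2 = d := Finset.HasAntidiagonal.mem_antidiagonal.mp hx
  rw [h x.1 (le_iff_exists_add.mpr ⟨x.2, hxd.symm⟩)]

lemma tele (f : MvPowerSeries (Fin n) K) (m : ℕ) :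
    (∑ k ∈ Finset.range m,
      ((∑ i : Fin p, Qop hp i (iter hp g f k) * (X (Fin.castLE hp i) + g i))
        + Lop p (iter hp g f k))) + iter hp g f m = f := by
  induction m with
  | zero => simp [iter]
  | succ m ih =>
    rw [Finset.sum_range_succ]
    have hstep := iter_step hp g f m
    linear_combination ih + hstep

include hlate h0 in
theorem exist_div (f : MvPowerSeries (Fin n) K) :
    f = (∑ i : Fin p, qq hp g f i * (X (Fin.castLE hp i) + g i)) + rr hp g f := by
  ext d
  set m := ldeg p d + 1 with hmdef
  have hm : ldeg p d < m := by omega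
  have h1 : ∀ i : Fin p, coeff d (qq hp g f i * (X (Fin.castLE hp i) + g i))
      = coeff d ((∑ k ∈ Finset.range m, Qop hp i (iter hp g f k))
          * (X (Fin.castLE hp i) + g i)) := by
    intro i
    refine coeff_mul_congr_left _ _ _ _ fun u hu => ?_
    rw [qq_coeff_ext hp g hlate h0 f i u m (lt_of_le_of_lt (ldeg_mono hu) hm), map_sum]
  have h2 : coeff d (rr hp g f)
      = coeff d (∑ k ∈ Finset.range m, Lop p (iter hp g f k)) := by
    rw [map_sum]
    exact rr_coeff_ext hp g hlate h0 f d m hm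
  rw [map_add, map_sum, Finset.sum_congr rfl (fun i _ => h1 i), h2, ← map_sum, ← map_add]
  have h3 : (∑ i : Fin p, (∑ k ∈ Finset.range m, Qop hp i (iter hp g f k))
        * (X (Fin.castLE hp i) + g i)) + (∑ k ∈ Finset.range m, Lop p (iter hp g f k))
      = f - iter hp g f m := by
    have ht := tele hp g f m
    have hs : ∑ i : Fin p, (∑ k ∈ Finset.range m, Qop hp i (iter hp g f k))
        * (X (Fin.castLE hp i) + g i)
        = ∑ k ∈ Finset.range m, ∑ i : Fin p, Qop hp i (iter hp g f k)
            * (X (Fin.castLE hp i) + g i) := by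
      rw [Finset.sum_comm]
      exact Finset.sum_congr rfl fun i _ => Finset.sum_mul _ _ _
    rw [hs, ← Finset.sum_add_distrib] at *
    linear_combination ht
  rw [h3, map_sub, iter_order hp g hlate h0 f m d hm, sub_zero]

end Iter

section Uniq

variable (hp : p ≤ n) (g : Fin p → MvPowerSeries (Fin n) K)

noncomputable def emb (α : Fin p →₀ ℕ) : Fin n →₀ ℕ := α.embDomain (Fin.castLEEmb hp)

lemma emb_add (α β : Fin p →₀ ℕ) : emb hp (α + β) = emb hp α + emb hp β :=
  Finsupp.embDomain_add _ _ _

lemma emb_zero : emb hp (0 : Fin p →₀ ℕ) = 0 := Finsupp.embDomain_zero _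

lemma emb_single (j : Fin p) (m : ℕ) :
    emb hp (Finsupp.single j m) = Finsupp.single (Fin.castLE hp j) m := by
  unfold emb
  rw [Finsupp.embDomain_single]
  rfl

lemma emb_apply_early (α : Fin p →₀ ℕ) (j : Fin p) :
    emb hp α (Fin.castLE hp j) = α j :=
  Finsupp.embDomain_apply_self _ _ _

lemma emb_apply_late (α : Fin p →₀ ℕ) (s : Fin n) (hs : p ≤ s.val) :
    emb hp α s = 0 := by
  refine Finsupp.embDomain_notin_range _ _ _ ?_
  rintro ⟨j, rfl⟩
  have h1 : ((Fin.castLEEmb hp) j).val = j.val := rfl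
  rw [h1] at hs
  have := j.isLt
  omega

noncomputable def GG (α : Fin p →₀ ℕ) : MvPowerSeries (Fin n) K :=
  (α.toMultiset.map g).prod

lemma GG_zero : GG g (0 : Fin p →₀ ℕ) = 1 := by
  unfold GG
  rw [Finsupp.toMultiset_zero, Multiset.map_zero, Multiset.prod_zero]

lemma GG_succ (α : Fin p →₀ ℕ) (j : Fin p) :
    GG g (α + Finsupp.single j 1) = GG g α * g j := by
  unfold GG
  rw [Finsupp.toMultiset_add, Multiset.map_add, Multiset.prod_add,
    Finsupp.toMultiset_single, one_nsmul, Multiset.map_singleton, Multiset.prod_singleton]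

lemma prod_order (s : Multiset (MvPowerSeries (Fin n) K))
    (hs : ∀ x ∈ s, constantCoeff x = 0) :
    ∀ v : Fin n →₀ ℕ, coeff v s.prod ≠ 0 → Multiset.card s ≤ usum v := by
  induction s using Multiset.induction_on with
  | empty => intro v _; simp
  | cons a s ih =>
    intro v hv
    rw [Multiset.prod_cons] at hv
    classical
    rw [coeff_mul] at hv
    obtain ⟨x, hx, hne⟩ := Finset.exists_ne_zero_of_sum_ne_zero hv
    have hxd : x.1 + x.2 = v := Finset.HasAntidiagonal.mem_antidiagonal.mp hx
    have h1 : coeff x.1 a ≠ 0 := left_ne_zero_of_mul hne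
    have h2 : coeff x.2 s.prod ≠ 0 := right_ne_zero_of_mul hne
    have hu0 : x.1 ≠ 0 := by
      intro hc
      rw [hc] at h1
      exact h1 (by rw [coeff_zero_eq_constantCoeff]; exact hs a (Multiset.mem_cons_self a s))
    have hcard := ih (fun x hx => hs x (Multiset.mem_cons_of_mem hx)) x.2 h2
    have := usum_pos hu0
    rw [Multiset.card_cons, ← hxd, usum_add]
    omega

lemma GG_order (h0 : ∀ i, constantCoeff (g i) = 0) (α : Fin p →₀ ℕ)
    (v : Fin n →₀ ℕ) (hv : coeff v (GG g α) ≠ 0) : asum α ≤ usum v := by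
  have hcard : Multiset.card (α.toMultiset.map g) = asum α := by
    rw [Multiset.card_map, Finsupp.card_toMultiset]
    rfl
  rw [← hcard]
  refine prod_order _ ?_ v hv
  intro x hx
  obtain ⟨i, _, rfl⟩ := Multiset.mem_map.mp hx
  exact h0 i

noncomputable def pye (α : Fin p →₀ ℕ) (a : MvPowerSeries (Fin n) K) :
    MvPowerSeries (Fin n) K :=
  fun d => if LateM p d then coeff (emb hp α + d) a else 0

lemma coeff_pye (α : Fin p →₀ ℕ) (a : MvPowerSeries (Fin n) K) (d : Fin n →₀ ℕ) :
    coeff d (pye hp α a) = if LateM p d then coeff (emb hp α + d) a else 0 := by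
  rw [coeff_apply]; rfl

lemma pye_add (α : Fin p →₀ ℕ) (a b : MvPowerSeries (Fin n) K) :
    pye hp α (a + b) = pye hp α a + pye hp α b := by
  ext d
  rw [map_add, coeff_pye, coeff_pye, coeff_pye]
  split_ifs with h
  · rw [map_add]
  · rw [add_zero]

noncomputable def cbound (p : ℕ) (N : ℕ) : Fin p →₀ ℕ :=
  Finsupp.equivFunOnFinite.symm (fun _ => N)

lemma cbound_apply (N : ℕ) (i : Fin p) : cbound p N i = N := rfl

noncomputable def Eop (a : MvPowerSeries (Fin n) K) : MvPowerSeries (Fin n) K :=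
  fun d => if LateM p d then
      ∑ α ∈ Finset.Iic (cbound p (usum d)),
        (-1 : K) ^ (asum α) * coeff d (pye hp α a * GG g α)
    else 0

lemma coeff_Eop_def (a : MvPowerSeries (Fin n) K) (d : Fin n →₀ ℕ) :
    coeff d (Eop hp g a) = if LateM p d then
      ∑ α ∈ Finset.Iic (cbound p (usum d)),
        (-1 : K) ^ (asum α) * coeff d (pye hp α a * GG g α)
    else 0 := by
  rw [coeff_apply]; rfl

lemma term_vanish (h0 : ∀ i, constantCoeff (g i) = 0)
    (b : MvPowerSeries (Fin n) K) (α : Fin p →₀ ℕ) (d : Fin n →₀ ℕ)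
    (h : usum d < asum α) : coeff d (b * GG g α) = 0 := by
  classical
  rw [coeff_mul]
  refine Finset.sum_eq_zero fun x hx => ?_
  have hxd : x.1 + x.2 = d := Finset.HasAntidiagonal.mem_antidiagonal.mp hx
  by_cases hG : coeff x.2 (GG g α) = 0
  · rw [hG, mul_zero]
  · exfalso
    have := GG_order g h0 α x.2 hG
    have : usum x.1 + usum x.2 = usum d := by rw [← hxd, usum_add]
    omega

lemma coeff_Eop (h0 : ∀ i, constantCoeff (g i) = 0)
    (a : MvPowerSeries (Fin n) K) (d : Fin n →₀ ℕ) (hd : LateM p d)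
    (N : ℕ) (hN : usum d ≤ N) :
    coeff d (Eop hp g a) = ∑ α ∈ Finset.Iic (cbound p N),
      (-1 : K) ^ (asum α) * coeff d (pye hp α a * GG g α) := by
  rw [coeff_Eop_def, if_pos hd]
  refine Finset.sum_subset ?_ ?_
  · intro α hα
    rw [Finset.mem_Iic] at *
    exact le_trans hα (by intro i; rw [cbound_apply, cbound_apply]; omega)
  · intro α hα1 hα2
    rw [Finset.mem_Iic] at hα1 hα2
    have : ∃ i, usum d < α i := by
      by_contra hc
      push_neg at hc
      exact hα2 (fun i => by rw [cbound_apply]; exact hc i)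
    obtain ⟨i, hi⟩ := this
    have : usum d < asum α := lt_of_lt_of_le hi (le_asum i)
    rw [term_vanish g h0 _ _ _ this, mul_zero]

lemma Eop_add (a b : MvPowerSeries (Fin n) K) :
    Eop hp g (a + b) = Eop hp g a + Eop hp g b := by
  ext d
  rw [map_add, coeff_Eop_def, coeff_Eop_def, coeff_Eop_def]
  split_ifs with h
  · rw [← Finset.sum_add_distrib]
    refine Finset.sum_congr rfl fun α _ => ?_
    rw [pye_add, add_mul, map_add, mul_add]
  · rw [add_zero]

lemma Eop_zero : Eop hp g (0 : MvPowerSeries (Fin n) K) = 0 := by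
  have h := Eop_add hp g 0 0
  rw [add_zero] at h
  nth_rewrite 1 [← add_zero (Eop hp g 0)] at h
  exact (add_left_cancel h).symm

/-- `Eop` fixes late-only series. -/
lemma Eop_late (δ : MvPowerSeries (Fin n) K) (hδ : LateOnly K n p δ) :
    Eop hp g δ = δ := by
  ext d
  rw [coeff_Eop_def]
  split_ifs with hd
  · rw [Finset.sum_eq_single_of_mem 0 (Finset.mem_Iic.mpr zero_le)]
    · have hpye : pye hp 0 δ = δ := by
        ext u
        rw [coeff_pye, emb_zero, zero_add]
        split_ifs with hu
        · rfl
        · exact ((lateOnly_iff.mp hδ) u hu).symm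
      rw [hpye, GG_zero, mul_one]
      have : asum (0 : Fin p →₀ ℕ) = 0 := Finsupp.sum_zero_index
      rw [this, pow_zero, one_mul]
    · intro α _ hα
      have hpye : pye hp α δ = 0 := by
        ext u
        rw [coeff_pye, map_zero]
        split_ifs with hu
        · obtain ⟨j, hj⟩ : ∃ j : Fin p, α j ≠ 0 := by
            by_contra hc
            push_neg at hc
            exact hα (Finsupp.ext hc)
          refine hδ _ ⟨Fin.castLE hp j, by simpa using j.isLt, ?_⟩
          rw [Finsupp.add_apply, emb_apply_early, hu _ (by simpa using j.isLt)]
          omega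
        · rfl
      rw [hpye, zero_mul, map_zero, mul_zero]
  · exact ((lateOnly_iff.mp hδ) d hd).symm

lemma pye_mul_X (α : Fin p →₀ ℕ) (h : MvPowerSeries (Fin n) K) (j : Fin p) :
    pye hp α (h * X (Fin.castLE hp j))
      = if α j = 0 then 0 else pye hp (α - Finsupp.single j 1) h := by
  ext d
  rw [coeff_pye]
  by_cases hd : LateM p d
  · rw [if_pos hd, coeff_mul_X']
    have hval : (emb hp α + d) (Fin.castLE hp j) = α j := by
      rw [Finsupp.add_apply, emb_apply_early, hd _ (by simpa using j.isLt), add_zero]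
    by_cases hαj : α j = 0
    · rw [if_neg (by rw [Finsupp.single_le_iff, hval]; omega), if_pos hαj, map_zero]
    · rw [if_pos (by rw [Finsupp.single_le_iff, hval]; omega), if_neg hαj, coeff_pye, if_pos hd]
      congr 1
      have hsle : Finsupp.single j 1 ≤ α := by rw [Finsupp.single_le_iff]; omega
      have key : emb hp (α - Finsupp.single j 1) + Finsupp.single (Fin.castLE hp j) 1
          = emb hp α := by
        rw [← emb_single hp j 1, ← emb_add, tsub_add_cancel_of_le hsle]
      rw [← key, add_right_comm, add_tsub_cancel_right]
  · rw [if_neg hd]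
    split_ifs with hαj
    · rw [map_zero]
    · rw [coeff_pye, if_neg hd]

lemma lateM_add {u v : Fin n →₀ ℕ} (hu : LateM p u) (hv : LateM p v) :
    LateM p (u + v) := by
  intro j hj
  rw [Finsupp.add_apply, hu j hj, hv j hj]

lemma pye_mul_g (α : Fin p →₀ ℕ) (h : MvPowerSeries (Fin n) K) (j : Fin p)
    (hgl : LateOnly K n p (g j)) :
    pye hp α (h * g j) = pye hp α h * g j := by
  classical
  ext d
  rw [coeff_pye]
  by_cases hd : LateM p d
  · rw [if_pos hd, coeff_mul, coeff_mul]
    have hle_of : ∀ x : (Fin n →₀ ℕ) × (Fin n →₀ ℕ), x.1 + x.2 = emb hp α + d →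
        LateM p x.2 → emb hp α ≤ x.1 := by
      intro x hxd hx2
      rw [Finsupp.le_def]
      intro s
      by_cases hs : s.val < p
      · have h1 := hx2 s hs
        have h2 := hd s hs
        have h3 := DFunLike.congr_fun hxd s
        rw [Finsupp.add_apply, Finsupp.add_apply, h1, h2] at h3
        omega
      · rw [emb_apply_late hp α s (by omega)]
        omega
    have hL : (∑ x ∈ Finset.HasAntidiagonal.antidiagonal (emb hp α + d), coeff x.1 h * coeff x.2 (g j))
        = ∑ x ∈ (Finset.HasAntidiagonal.antidiagonal (emb hp α + d)).filter (fun x => LateM p x.2),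
            coeff x.1 h * coeff x.2 (g j) :=
      (Finset.sum_filter_of_ne (fun x _ hx => by
        by_contra hc
        exact hx (by rw [(lateOnly_iff.mp hgl) x.2 hc, mul_zero]))).symm
    have hR : (∑ y ∈ Finset.HasAntidiagonal.antidiagonal d, coeff y.1 (pye hp α h) * coeff y.2 (g j))
        = ∑ y ∈ (Finset.HasAntidiagonal.antidiagonal d).filter (fun y => LateM p y.2),
            coeff y.1 (pye hp α h) * coeff y.2 (g j) :=
      (Finset.sum_filter_of_ne (fun y _ hy => by
        by_contra hc
        exact hy (by rw [(lateOnly_iff.mp hgl) y.2 hc, mul_zero]))).symm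
    rw [hL, hR]
    refine Finset.sum_bij' (fun x _ => (x.1 - emb hp α, x.2))
      (fun y _ => (emb hp α + y.1, y.2)) ?_ ?_ ?_ ?_ ?_
    · intro x hx
      rw [Finset.mem_filter] at hx ⊢
      obtain ⟨hmem, hx2⟩ := hx
      have hxd : x.1 + x.2 = emb hp α + d := Finset.HasAntidiagonal.mem_antidiagonal.mp hmem
      have hle := hle_of x hxd hx2
      refine ⟨?_, hx2⟩
      rw [Finset.HasAntidiagonal.mem_antidiagonal]
      ext s
      have h3 := DFunLike.congr_fun hxd s
      rw [Finsupp.add_apply, Finsupp.add_apply] at h3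
      have h4 := Finsupp.le_def.mp hle s
      simp only [Finsupp.add_apply, Finsupp.tsub_apply]
      omega
    · intro y hy
      rw [Finset.mem_filter] at hy ⊢
      obtain ⟨hmem, hy2⟩ := hy
      have hyd : y.1 + y.2 = d := Finset.HasAntidiagonal.mem_antidiagonal.mp hmem
      exact ⟨by rw [Finset.HasAntidiagonal.mem_antidiagonal, add_assoc, hyd], hy2⟩
    · intro x hx
      dsimp only
      rw [Finset.mem_filter] at hx
      obtain ⟨hmem, hx2⟩ := hx
      have hxd : x.1 + x.2 = emb hp α + d := Finset.HasAntidiagonal.mem_antidiagonal.mp hmem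
      have hle := hle_of x hxd hx2
      rw [Prod.ext_iff]
      exact ⟨add_tsub_cancel_of_le hle, rfl⟩
    · intro y hy
      dsimp only
      rw [Prod.ext_iff]
      exact ⟨add_tsub_cancel_left _ _, rfl⟩
    · intro x hx
      dsimp only
      rw [Finset.mem_filter] at hx
      obtain ⟨hmem, hx2⟩ := hx
      have hxd : x.1 + x.2 = emb hp α + d := Finset.HasAntidiagonal.mem_antidiagonal.mp hmem
      have hle := hle_of x hxd hx2
      have hlate1 : LateM p (x.1 - emb hp α) := by
        intro s hs
        have h1 := hx2 s hs
        have h2 := hd s hs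
        have h3 := DFunLike.congr_fun hxd s
        rw [Finsupp.add_apply, Finsupp.add_apply, h1, h2] at h3
        rw [Finsupp.tsub_apply]
        omega
      rw [coeff_pye, if_pos hlate1, add_tsub_cancel_of_le hle]
  · rw [if_neg hd, coeff_mul]
    symm
    refine Finset.sum_eq_zero fun y hy => ?_
    have hyd : y.1 + y.2 = d := Finset.HasAntidiagonal.mem_antidiagonal.mp hy
    by_cases hg2 : coeff y.2 (g j) = 0
    · rw [hg2, mul_zero]
    · have hl2 : LateM p y.2 := by
        by_contra hc
        exact hg2 ((lateOnly_iff.mp hgl) y.2 hc)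
      rw [coeff_pye, if_neg, zero_mul]
      intro hl1
      exact hd (hyd ▸ lateM_add hl1 hl2)

lemma asum_single_one (j : Fin p) : asum (Finsupp.single j 1) = 1 := by
  unfold asum
  rw [Finsupp.sum_single_index]
  rfl

lemma Eop_kill (hgl : ∀ i, LateOnly K n p (g i))
    (h0 : ∀ i, constantCoeff (g i) = 0)
    (h : MvPowerSeries (Fin n) K) (j : Fin p) :
    Eop hp g (h * (X (Fin.castLE hp j) + g j)) = 0 := by
  classical
  rw [mul_add, Eop_add]
  ext d
  rw [map_add, map_zero]
  by_cases hd : LateM p d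
  case neg => rw [coeff_Eop_def, coeff_Eop_def, if_neg hd, if_neg hd, add_zero]
  case pos =>
  have cB : coeff d (Eop hp g (h * g j))
      = ∑ β ∈ Finset.Iic (cbound p (usum d)),
          (-1:K)^(asum β) * coeff d (pye hp β h * (GG g β * g j)) := by
    rw [coeff_Eop_def, if_pos hd]
    refine Finset.sum_congr rfl fun β _ => ?_
    rw [pye_mul_g hp g β h j (hgl j), mul_assoc, mul_comm (g j)]
  have cA : coeff d (Eop hp g (h * X (Fin.castLE hp j)))
      = ∑ β ∈ Finset.Iic (cbound p (usum d)),
          -((-1:K)^(asum β) * coeff d (pye hp β h * (GG g β * g j))) := by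
    rw [coeff_Eop hp g h0 _ d hd (usum d + 1) (by omega)]
    have hfil : (∑ α ∈ Finset.Iic (cbound p (usum d + 1)),
          (-1:K)^(asum α) * coeff d (pye hp α (h * X (Fin.castLE hp j)) * GG g α))
        = ∑ α ∈ (Finset.Iic (cbound p (usum d + 1))).filter
            (fun α => α j ≠ 0 ∧ α - Finsupp.single j 1 ≤ cbound p (usum d)),
            (-1:K)^(asum α) * coeff d (pye hp α (h * X (Fin.castLE hp j)) * GG g α) := by
      refine (Finset.sum_filter_of_ne ?_).symm
      intro α _ hne
      by_cases hαj : α j = 0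
      · exfalso
        refine hne ?_
        rw [pye_mul_X, if_pos hαj, zero_mul, map_zero, mul_zero]
      refine ⟨hαj, ?_⟩
      by_contra hc
      refine hne ?_
      have hsle : Finsupp.single j 1 ≤ α := by rw [Finsupp.single_le_iff]; omega
      have hex : ∃ i, usum d < (α - Finsupp.single j 1 : Fin p →₀ ℕ) i := by
        by_contra hcc
        push_neg at hcc
        exact hc (Finsupp.le_def.mpr fun i => by rw [cbound_apply]; exact hcc i)
      obtain ⟨i, hi⟩ := hex
      have h1 : usum d < asum (α - Finsupp.single j 1) :=
        lt_of_lt_of_le hi (le_asum i)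
      have h2 : asum α = asum (α - Finsupp.single j 1) + 1 := by
        conv_lhs => rw [← tsub_add_cancel_of_le hsle]
        rw [asum_add, asum_single_one]
      rw [pye_mul_X, if_neg hαj, term_vanish g h0 _ _ _ (by omega), mul_zero]
    rw [hfil]
    refine Finset.sum_bij' (fun α _ => α - Finsupp.single j 1)
      (fun β _ => β + Finsupp.single j 1) ?_ ?_ ?_ ?_ ?_
    · intro α hα
      rw [Finset.mem_filter] at hα
      exact Finset.mem_Iic.mpr hα.2.2
    · intro β hβ
      rw [Finset.mem_Iic] at hβ
      rw [Finset.mem_filter]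
      refine ⟨Finset.mem_Iic.mpr ?_, ?_, ?_⟩
      · refine Finsupp.le_def.mpr fun i => ?_
        have := Finsupp.le_def.mp hβ i
        rw [cbound_apply] at this ⊢
        rw [Finsupp.add_apply]
        have : Finsupp.single j 1 i ≤ 1 := by
          rw [Finsupp.single_apply]
          split_ifs <;> omega
        omega
      · rw [Finsupp.add_apply, Finsupp.single_apply, if_pos rfl]
        omega
      · rw [add_tsub_cancel_right]
        exact hβ
    · intro α hα
      rw [Finset.mem_filter] at hα
      have hsle : Finsupp.single j 1 ≤ α := by
        rw [Finsupp.single_le_iff]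
        have := hα.2.1
        omega
      exact tsub_add_cancel_of_le hsle
    · intro β _
      exact add_tsub_cancel_right _ _
    · intro α hα
      rw [Finset.mem_filter] at hα
      obtain ⟨_, hαj, _⟩ := hα
      have hsle : Finsupp.single j 1 ≤ α := by rw [Finsupp.single_le_iff]; omega
      rw [pye_mul_X, if_neg hαj]
      have h2 : asum α = asum (α - Finsupp.single j 1) + 1 := by
        conv_lhs => rw [← tsub_add_cancel_of_le hsle]
        rw [asum_add, asum_single_one]
      have h3 : GG g α = GG g (α - Finsupp.single j 1) * g j := by
        conv_lhs => rw [← tsub_add_cancel_of_le hsle]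
        rw [GG_succ]
      rw [h2, h3, pow_succ]
      ring
  rw [cA, cB, ← Finset.sum_add_distrib]
  exact Finset.sum_eq_zero fun β _ => neg_add_cancel _

noncomputable def EopHom : MvPowerSeries (Fin n) K →+ MvPowerSeries (Fin n) K :=
  AddMonoidHom.mk' (Eop hp g) (Eop_add hp g)

lemma uniq_r (hgl : ∀ i, LateOnly K n p (g i))
    (h0 : ∀ i, constantCoeff (g i) = 0)
    (q₁ q₂ : Fin p → MvPowerSeries (Fin n) K)
    (r₁ r₂ : MvPowerSeries (Fin n) K)
    (hr₁ : LateOnly K n p r₁) (hr₂ : LateOnly K n p r₂)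
    (heq : (∑ i : Fin p, q₁ i * (X (Fin.castLE hp i) + g i)) + r₁
         = (∑ i : Fin p, q₂ i * (X (Fin.castLE hp i) + g i)) + r₂) :
    r₁ = r₂ := by
  have hkill : ∀ q : Fin p → MvPowerSeries (Fin n) K,
      Eop hp g (∑ i : Fin p, q i * (X (Fin.castLE hp i) + g i)) = 0 := by
    intro q
    have : Eop hp g (∑ i : Fin p, q i * (X (Fin.castLE hp i) + g i))
        = ∑ i : Fin p, Eop hp g (q i * (X (Fin.castLE hp i) + g i)) :=
      map_sum (EopHom hp g) _ _
    rw [this]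
    exact Finset.sum_eq_zero fun i _ => Eop_kill hp g hgl h0 (q i) i
  have h1 : Eop hp g ((∑ i : Fin p, q₁ i * (X (Fin.castLE hp i) + g i)) + r₁) = r₁ := by
    rw [Eop_add, hkill, Eop_late hp g r₁ hr₁, zero_add]
  have h2 : Eop hp g ((∑ i : Fin p, q₂ i * (X (Fin.castLE hp i) + g i)) + r₂) = r₂ := by
    rw [Eop_add, hkill, Eop_late hp g r₂ hr₂, zero_add]
  rw [← h1, ← h2, heq]

end Uniq

end SW

/-- Division lemma: if `fᵢ = yᵢ + gᵢ` with `gᵢ ∈ K[[y_{p+1},…,yₙ]]`,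
`gᵢ(0) = 0`, then every `f ∈ K[[y₁,…,yₙ]]` can be written as
`f = Σ qᵢ fᵢ + r` with `r ∈ K[[y_{p+1},…,yₙ]]`, and `r` is unique. -/
theorem stmt_8 (K : Type) [Field K] (n p : ℕ) (hp : p ≤ n)
    (g : Fin p → MvPowerSeries (Fin n) K)
    (hlate : ∀ i, LateOnly K n p (g i))
    (h0 : ∀ i, MvPowerSeries.constantCoeff (g i) = 0)
    (f : MvPowerSeries (Fin n) K) :
    (∃ (q : Fin p → MvPowerSeries (Fin n) K) (r : MvPowerSeries (Fin n) K),
        LateOnly K n p r ∧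
        f = (∑ i : Fin p, q i * (MvPowerSeries.X (Fin.castLE hp i) + g i)) + r) ∧
    (∀ (q₁ q₂ : Fin p → MvPowerSeries (Fin n) K)
        (r₁ r₂ : MvPowerSeries (Fin n) K),
        LateOnly K n p r₁ → LateOnly K n p r₂ →
        f = (∑ i : Fin p, q₁ i * (MvPowerSeries.X (Fin.castLE hp i) + g i)) + r₁ →
        f = (∑ i : Fin p, q₂ i * (MvPowerSeries.X (Fin.castLE hp i) + g i)) + r₂ →
        r₁ = r₂) := by
  constructor
  · exact ⟨SW.qq hp g f, SW.rr hp g f, SW.rr_late hp g f, SW.exist_div hp g hlate h0 f⟩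
  · intro q₁ q₂ r₁ r₂ hr₁ hr₂ h1 h2
    exact SW.uniq_r hp g hlate h0 q₁ q₂ r₁ r₂ hr₁ hr₂ (h1.symm.trans h2)
end

section
/- Under the hypotheses of the division lemma (f_i = y_i + g_i with g_i ∈ K[[y_{p+1},…,yₙ]], g_i(0)=0, for i = 1,…,p), if μ₁,…,μ_p ∈ K[[y₁,…,yₙ]] and h ∈ K[[y_{p+1},…,yₙ]] satisfy Σ_{i=1}^p μ_i f_i = h, then h = 0. -/
open MvPowerSeries Finsupp

section Aux

variable {K : Type} [Field K] {n p : ℕ}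

/-- `d` is supported on late variables. -/
def IsLate (n p : ℕ) (d : Fin n →₀ ℕ) : Prop := ∀ i : Fin n, (i : ℕ) < p → d i = 0

instance : DecidablePred (IsLate n p) := fun _ => Fintype.decidableForallFintype

/-- early embedding of an exponent vector. -/
noncomputable def EE (n p : ℕ) (a : Fin p → ℕ) : Fin n →₀ ℕ :=
  Finsupp.equivFunOnFinite.symm (fun i => if h : (i : ℕ) < p then a ⟨i, h⟩ else 0)

lemma EE_apply (a : Fin p → ℕ) (i : Fin n) :
    EE n p a i = if h : (i : ℕ) < p then a ⟨i, h⟩ else 0 := rfl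

lemma EE_castLE (hp : p ≤ n) (a : Fin p → ℕ) (j : Fin p) :
    EE n p a (Fin.castLE hp j) = a j := by
  rw [EE_apply]
  have hj : ((Fin.castLE hp j : Fin n) : ℕ) < p := by simpa using j.isLt
  rw [dif_pos hj]
  rfl

lemma EE_zero : EE n p (0 : Fin p → ℕ) = 0 := by
  ext i; rw [EE_apply]; split <;> rfl

/-- slice of `μ` shifted by the early exponent `a`, truncated to late exponents. -/
noncomputable def MM (μj : MvPowerSeries (Fin n) K) (a : Fin p → ℕ) :
    MvPowerSeries (Fin n) K :=
  fun d => if IsLate n p d then MvPowerSeries.coeff (EE n p a + d) μj else 0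

lemma coeff_MM (μj : MvPowerSeries (Fin n) K) (a : Fin p → ℕ) (d : Fin n →₀ ℕ) :
    MvPowerSeries.coeff d (MM μj a)
      = if IsLate n p d then MvPowerSeries.coeff (EE n p a + d) μj else 0 := rfl


lemma isLate_of_le {d e : Fin n →₀ ℕ} (hd : IsLate n p d) (h : ∀ i, e i ≤ d i) :
    IsLate n p e := fun i hi => Nat.le_antisymm ((h i).trans (hd i hi).le) (Nat.zero_le _)

lemma isLate_left {d : Fin n →₀ ℕ} (hd : IsLate n p d)
    {q : (Fin n →₀ ℕ) × (Fin n →₀ ℕ)} (hq : q.1 + q.2 = d) : IsLate n p q.1 :=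
  isLate_of_le hd (fun i => by
    have := congrArg (fun z => z i) hq
    simp only [Finsupp.add_apply] at this
    omega)

lemma isLate_right {d : Fin n →₀ ℕ} (hd : IsLate n p d)
    {q : (Fin n →₀ ℕ) × (Fin n →₀ ℕ)} (hq : q.1 + q.2 = d) : IsLate n p q.2 :=
  isLate_of_le hd (fun i => by
    have := congrArg (fun z => z i) hq
    simp only [Finsupp.add_apply] at this
    omega)

lemma lateOnly_iff {f : MvPowerSeries (Fin n) K} :
    LateOnly K n p f ↔ ∀ d, ¬ IsLate n p d → MvPowerSeries.coeff d f = 0 := by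
  unfold LateOnly IsLate
  constructor
  · intro H d hd
    apply H
    push_neg at hd
    obtain ⟨i, hi, h2⟩ := hd
    exact ⟨i, hi, h2⟩
  · intro H d hd
    apply H
    intro hl
    obtain ⟨j, hj, h2⟩ := hd
    exact h2 (hl j hj)

/-- Key lemma B : shifting past a late-only factor. -/
lemma coeff_shift_mul_late (hp : p ≤ n) (f ψ : MvPowerSeries (Fin n) K)
    (hf : LateOnly K n p f) (a : Fin p → ℕ) (d : Fin n →₀ ℕ) (hd : IsLate n p d) :
    MvPowerSeries.coeff (EE n p a + d) (ψ * f)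
      = MvPowerSeries.coeff d (MM ψ a * f) := by
  classical
  rw [MvPowerSeries.coeff_mul, MvPowerSeries.coeff_mul]
  set emb : ((Fin n →₀ ℕ) × (Fin n →₀ ℕ)) ↪ ((Fin n →₀ ℕ) × (Fin n →₀ ℕ)) :=
    ⟨fun q => (EE n p a + q.1, q.2), by
      intro q r hqr
      simp only [Prod.mk.injEq] at hqr
      exact Prod.ext (add_left_cancel hqr.1) hqr.2⟩ with hemb
  have hsub : ((Finset.HasAntidiagonal.antidiagonal d).map emb) ⊆ Finset.HasAntidiagonal.antidiagonal (EE n p a + d) := by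
    intro q hq
    simp only [Finset.mem_map, Finset.HasAntidiagonal.mem_antidiagonal, hemb, Function.Embedding.coeFn_mk] at hq ⊢
    obtain ⟨r, hr, rfl⟩ := hq
    show EE n p a + r.1 + r.2 = EE n p a + d
    rw [add_assoc, hr]
  rw [← Finset.sum_subset hsub ?van]
  · rw [Finset.sum_map]
    refine Finset.sum_congr rfl (fun q hq => ?_)
    rw [Finset.HasAntidiagonal.mem_antidiagonal] at hq
    simp only [hemb, Function.Embedding.coeFn_mk]
    rw [coeff_MM, if_pos (isLate_left hd hq)]
    rfl
  · intro q hq hq2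
    rw [Finset.HasAntidiagonal.mem_antidiagonal] at hq
    by_cases hlq : IsLate n p q.2
    · exfalso
      apply hq2
      simp only [Finset.mem_map, Finset.HasAntidiagonal.mem_antidiagonal, hemb, Function.Embedding.coeFn_mk]
      have hle : ∀ i, q.2 i ≤ d i := by
        intro i
        have h1 := congrArg (fun z => z i) hq
        simp only [Finsupp.add_apply] at h1
        by_cases hi : (i : ℕ) < p
        · rw [hlq i hi]
          exact Nat.zero_le _
        · rw [EE_apply, dif_neg hi] at h1
          omega
      refine ⟨(d - q.2, q.2), ?_, ?_⟩
      · rw [tsub_add_cancel_of_le (Finsupp.le_def.mpr hle)]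
      · refine Prod.ext ?_ rfl
        ext i
        change (EE n p a + (d - q.2)) i = q.1 i
        have h1 := congrArg (fun z => z i) hq
        simp only [Finsupp.add_apply, Finsupp.tsub_apply] at h1 ⊢
        have h2 := hle i
        omega
    · rw [lateOnly_iff.mp hf _ hlq, mul_zero]


lemma EE_sub_single (hp : p ≤ n) (a : Fin p → ℕ) (j : Fin p) (hj : a j ≠ 0)
    (d : Fin n →₀ ℕ) (hd : IsLate n p d) :
    EE n p a + d - Finsupp.single (Fin.castLE hp j) 1
      = EE n p (a - Pi.single j 1) + d := by
  ext i
  simp only [Finsupp.tsub_apply, Finsupp.add_apply, Finsupp.single_apply]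
  by_cases hij : i = Fin.castLE hp j
  · subst hij
    rw [if_pos rfl, EE_castLE, EE_castLE, hd _ (by simpa using j.isLt)]
    simp only [Pi.sub_apply, Pi.single_eq_same]
    omega
  · rw [if_neg (fun h => hij h.symm)]
    by_cases hi : (i : ℕ) < p
    · rw [EE_apply, EE_apply, dif_pos hi, dif_pos hi]
      have : (⟨(i : ℕ), hi⟩ : Fin p) ≠ j := by
        intro h
        apply hij
        apply Fin.ext
        have : ((⟨(i : ℕ), hi⟩ : Fin p) : ℕ) = (j : ℕ) := by rw [h]
        simpa using this
      simp only [Pi.sub_apply, Pi.single_apply, if_neg this]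
      omega
    · rw [EE_apply, EE_apply, dif_neg hi, dif_neg hi]
      omega

/-- Key lemma A : coefficient of `ψ * X j` at a shifted exponent. -/
lemma coeff_shift_mul_X (hp : p ≤ n) (ψ : MvPowerSeries (Fin n) K)
    (a : Fin p → ℕ) (j : Fin p) (d : Fin n →₀ ℕ) (hd : IsLate n p d) :
    MvPowerSeries.coeff (EE n p a + d) (ψ * MvPowerSeries.X (Fin.castLE hp j))
      = if a j ≠ 0 then MvPowerSeries.coeff d (MM ψ (a - Pi.single j 1)) else 0 := by
  classical
  rw [MvPowerSeries.X_def, MvPowerSeries.coeff_mul_monomial]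
  have hval : (EE n p a + d) (Fin.castLE hp j) = a j := by
    rw [Finsupp.add_apply, EE_castLE, hd _ (by simpa using j.isLt), add_zero]
  by_cases hj : a j ≠ 0
  · rw [if_pos (Finsupp.single_le_iff.mpr (by omega)), if_pos hj, mul_one,
      EE_sub_single hp a j hj d hd, coeff_MM, if_pos hd]
  · rw [if_neg (fun hle => hj (by have := Finsupp.single_le_iff.mp hle; omega)), if_neg hj]


variable (hp : p ≤ n) (g : Fin p → MvPowerSeries (Fin n) K)
    (μ : Fin p → MvPowerSeries (Fin n) K) (h : MvPowerSeries (Fin n) K)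

/-- The slice sum `S a`. -/
noncomputable def SS (μ : Fin p → MvPowerSeries (Fin n) K) (a : Fin p → ℕ) :
    MvPowerSeries (Fin n) K :=
  ∑ j : Fin p, if a j ≠ 0 then MM (μ j) (a - Pi.single j 1) else 0

/-- `S a`, with `-h` folded in at `a = 0`. -/
noncomputable def TT (μ : Fin p → MvPowerSeries (Fin n) K) (h : MvPowerSeries (Fin n) K)
    (a : Fin p → ℕ) : MvPowerSeries (Fin n) K :=
  if a = 0 then -h else SS μ a

lemma key_coeff (hlate : ∀ i, LateOnly K n p (g i))
    (hsum : (∑ i : Fin p, μ i * (MvPowerSeries.X (Fin.castLE hp i) + g i)) = h)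
    (a : Fin p → ℕ) (d : Fin n →₀ ℕ) (hd : IsLate n p d) :
    MvPowerSeries.coeff (EE n p a + d) h
      = MvPowerSeries.coeff d (SS μ a)
        + ∑ j : Fin p, MvPowerSeries.coeff d (MM (μ j) a * g j) := by
  classical
  rw [← hsum, map_sum]
  have : ∀ j : Fin p,
      MvPowerSeries.coeff (EE n p a + d)
        (μ j * (MvPowerSeries.X (Fin.castLE hp j) + g j))
      = (if a j ≠ 0 then MvPowerSeries.coeff d (MM (μ j) (a - Pi.single j 1)) else 0)
        + MvPowerSeries.coeff d (MM (μ j) a * g j) := by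
    intro j
    rw [mul_add, map_add, coeff_shift_mul_X hp (μ j) a j d hd,
      coeff_shift_mul_late hp (g j) (μ j) (hlate j) a d hd]
  rw [Finset.sum_congr rfl (fun j _ => this j), Finset.sum_add_distrib]
  congr 1
  rw [SS, map_sum]
  refine Finset.sum_congr rfl (fun j _ => ?_)
  split <;> simp

/-- The master relation : `TT a = -∑ l, MM (μ l) a * g l`. -/
lemma relation (hlate : ∀ i, LateOnly K n p (g i)) (hh : LateOnly K n p h)
    (hsum : (∑ i : Fin p, μ i * (MvPowerSeries.X (Fin.castLE hp i) + g i)) = h)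
    (a : Fin p → ℕ) :
    TT μ h a = -(∑ l : Fin p, MM (μ l) a * g l) := by
  classical
  apply MvPowerSeries.ext
  intro d
  by_cases hd : IsLate n p d
  · have hkey := key_coeff hp g μ h hlate hsum a d hd
    by_cases ha : a = 0
    · subst ha
      rw [TT, if_pos rfl]
      have hS : SS μ (0 : Fin p → ℕ) = 0 := by
        rw [SS]
        refine Finset.sum_eq_zero (fun j _ => ?_)
        rw [if_neg (by simp)]
      rw [hS, map_zero, zero_add, EE_zero, zero_add] at hkey
      rw [map_neg, map_neg, map_sum, hkey]
    · rw [TT, if_neg ha]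
      have hne : MvPowerSeries.coeff (EE n p a + d) h = 0 := by
        apply hh
        obtain ⟨j, hj⟩ : ∃ j, a j ≠ 0 := by
          by_contra hc
          push_neg at hc
          exact ha (funext hc)
        refine ⟨Fin.castLE hp j, by simpa using j.isLt, ?_⟩
        rw [Finsupp.add_apply, EE_castLE]
        omega
      rw [hne] at hkey
      rw [map_neg, map_sum]
      linear_combination -hkey
  · rw [map_neg, map_sum]
    have h1 : ∀ l : Fin p, MvPowerSeries.coeff d (MM (μ l) a * g l) = 0 := by
      intro l
      rw [MvPowerSeries.coeff_mul]
      refine Finset.sum_eq_zero (fun q hq => ?_)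
      rw [Finset.HasAntidiagonal.mem_antidiagonal] at hq
      by_cases hq1 : IsLate n p q.1
      · by_cases hq2 : IsLate n p q.2
        · exact absurd (fun i hi => by
            have := congrArg (fun z => z i) hq
            simp only [Finsupp.add_apply] at this
            rw [← this, hq1 i hi, hq2 i hi]) hd
        · rw [lateOnly_iff.mp (hlate l) _ hq2, mul_zero]
      · rw [coeff_MM, if_neg hq1, zero_mul]
    rw [Finset.sum_congr rfl (fun l _ => h1 l), Finset.sum_const, smul_zero, neg_zero]
    rw [TT]
    split
    · rw [map_neg, lateOnly_iff.mp hh _ hd, neg_zero]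
    · rw [SS, map_sum]
      refine Finset.sum_eq_zero (fun j _ => ?_)
      split
      · rw [coeff_MM, if_neg hd]
      · exact map_zero _


/-- product of the `g`'s with multiplicity `a`. -/
noncomputable def GG (g : Fin p → MvPowerSeries (Fin n) K) (a : Fin p → ℕ) :
    MvPowerSeries (Fin n) K :=
  ∏ j : Fin p, g j ^ a j

lemma GG_add_single (a : Fin p → ℕ) (l : Fin p) :
    GG g (a + Pi.single l 1) = GG g a * g l := by
  classical
  rw [GG, GG]
  trans (∏ j : Fin p, (g j ^ a j * g j ^ (Pi.single l 1 : Fin p → ℕ) j))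
  · exact Finset.prod_congr rfl (fun j _ => by rw [Pi.add_apply, pow_add])
  rw [Finset.prod_mul_distrib]
  congr 1
  rw [Finset.prod_eq_single l (fun j _ hj => by
      rw [Pi.single_apply, if_neg hj, pow_zero]) (by simp)]
  simp

/-- The telescoping sums. -/
noncomputable def UU (g μ : Fin p → MvPowerSeries (Fin n) K)
    (h : MvPowerSeries (Fin n) K) (k : ℕ) : MvPowerSeries (Fin n) K :=
  ∑ a ∈ Finset.Nat.antidiagonalTuple p k, TT μ h a * GG g a

lemma sub_add_single {b : Fin p → ℕ} {l : Fin p} (hb : b l ≠ 0) :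
    b - Pi.single l 1 + Pi.single l 1 = b := by
  funext i
  rcases eq_or_ne i l with rfl | hi
  · simp only [Pi.add_apply, Pi.sub_apply, Pi.single_eq_same]
    omega
  · simp only [Pi.add_apply, Pi.sub_apply, Pi.single_apply, if_neg hi]
    omega

lemma UU_zero : UU g μ h 0 = -h := by
  rw [UU, Finset.Nat.antidiagonalTuple_zero_right, Finset.sum_singleton, TT, if_pos rfl,
    GG]
  simp

lemma UU_succ (hlate : ∀ i, LateOnly K n p (g i)) (hh : LateOnly K n p h)
    (hsum : (∑ i : Fin p, μ i * (MvPowerSeries.X (Fin.castLE hp i) + g i)) = h)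
    (k : ℕ) : UU g μ h k = - UU g μ h (k + 1) := by
  classical
  rw [UU, UU]
  have step1 : ∀ a ∈ Finset.Nat.antidiagonalTuple p k,
      TT μ h a * GG g a = -(∑ l : Fin p, MM (μ l) a * GG g (a + Pi.single l 1)) := by
    intro a _
    rw [relation hp g μ h hlate hh hsum a, neg_mul, Finset.sum_mul, neg_inj]
    refine Finset.sum_congr rfl (fun l _ => ?_)
    rw [GG_add_single, mul_comm (GG g a) (g l), ← mul_assoc]
  have step2 : ∀ b ∈ Finset.Nat.antidiagonalTuple p (k + 1),
      TT μ h b * GG g b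
        = ∑ l ∈ Finset.univ.filter (fun l => b l ≠ 0),
            MM (μ l) (b - Pi.single l 1) * GG g b := by
    intro b hb
    have hbne : b ≠ 0 := by
      intro hb0
      rw [Finset.Nat.mem_antidiagonalTuple, hb0] at hb
      simp at hb
    rw [TT, if_neg hbne, SS, Finset.sum_mul, Finset.sum_filter]
    refine Finset.sum_congr rfl (fun l _ => ?_)
    split <;> simp
  rw [Finset.sum_congr rfl step1, Finset.sum_congr rfl step2,
    Finset.sum_neg_distrib, neg_inj]
  rw [Finset.sum_sigma', Finset.sum_sigma']
  refine Finset.sum_nbij' (fun x => ⟨x.1 + Pi.single x.2 1, x.2⟩)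
    (fun x => ⟨x.1 - Pi.single x.2 1, x.2⟩) ?_ ?_ ?_ ?_ ?_
  · rintro ⟨a, l⟩ hx
    rw [Finset.mem_sigma, Finset.Nat.mem_antidiagonalTuple] at hx
    rw [Finset.mem_sigma, Finset.Nat.mem_antidiagonalTuple, Finset.mem_filter]
    have h1 : (∑ i : Fin p, (Pi.single l 1 : Fin p → ℕ) i) = 1 := by simp
    refine ⟨?_, Finset.mem_univ l, ?_⟩
    · simp only [Pi.add_apply]
      rw [Finset.sum_add_distrib, hx.1, h1]
    · simp only [Pi.add_apply, Pi.single_eq_same]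
      omega
  · rintro ⟨b, l⟩ hx
    rw [Finset.mem_sigma, Finset.mem_filter, Finset.Nat.mem_antidiagonalTuple] at hx
    dsimp only at hx
    obtain ⟨hb1, -, hb2⟩ := hx
    have h2 := congrArg (fun z : Fin p → ℕ => ∑ i : Fin p, z i) (sub_add_single hb2)
    simp only [Pi.add_apply] at h2
    rw [Finset.sum_add_distrib] at h2
    have h1 : (∑ i : Fin p, (Pi.single l 1 : Fin p → ℕ) i) = 1 := by simp
    have hmem : (b - Pi.single l 1) ∈ Finset.Nat.antidiagonalTuple p k :=
      Finset.Nat.mem_antidiagonalTuple.mpr (by omega)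
    exact Finset.mem_sigma.mpr ⟨hmem, Finset.mem_univ l⟩
  · rintro ⟨a, l⟩ hx
    have h4 : a + Pi.single l 1 - Pi.single l 1 = a := by
      funext i; simp only [Pi.add_apply, Pi.sub_apply]; omega
    exact congrArg (fun z : Fin p → ℕ =>
      (⟨z, l⟩ : Σ _ : Fin p → ℕ, Fin p)) h4
  · rintro ⟨b, l⟩ hx
    rw [Finset.mem_sigma, Finset.mem_filter, Finset.Nat.mem_antidiagonalTuple] at hx
    dsimp only at hx
    obtain ⟨hb1, -, hb2⟩ := hx
    exact congrArg (fun z : Fin p → ℕ =>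
      (⟨z, l⟩ : Σ _ : Fin p → ℕ, Fin p)) (sub_add_single hb2)
  · rintro ⟨a, l⟩ hx
    have h4 : a + Pi.single l 1 - Pi.single l 1 = a := by
      funext i; simp only [Pi.add_apply, Pi.sub_apply]; omega
    simp only
    rw [h4]


lemma UU_pm (hlate : ∀ i, LateOnly K n p (g i)) (hh : LateOnly K n p h)
    (hsum : (∑ i : Fin p, μ i * (MvPowerSeries.X (Fin.castLE hp i) + g i)) = h)
    (k : ℕ) : UU g μ h k = h ∨ UU g μ h k = -h := by
  induction k with
  | zero => exact Or.inr (UU_zero g μ h)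
  | succ k ih =>
    have hs := UU_succ hp g μ h hlate hh hsum k
    rcases ih with h1 | h1
    · rw [h1] at hs
      exact Or.inr (neg_eq_iff_eq_neg.mp hs.symm)
    · rw [h1] at hs
      exact Or.inl (neg_injective hs).symm

lemma coeff_mul_eq_zero (c c' : ℕ) (x y : MvPowerSeries (Fin n) K)
    (hx : ∀ v : Fin n →₀ ℕ, (∑ i : Fin n, v i) < c → MvPowerSeries.coeff v x = 0)
    (hy : ∀ v : Fin n →₀ ℕ, (∑ i : Fin n, v i) < c' → MvPowerSeries.coeff v y = 0)
    (v : Fin n →₀ ℕ) (hv : (∑ i : Fin n, v i) < c + c') :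
    MvPowerSeries.coeff v (x * y) = 0 := by
  classical
  rw [MvPowerSeries.coeff_mul]
  refine Finset.sum_eq_zero (fun q hq => ?_)
  rw [Finset.HasAntidiagonal.mem_antidiagonal] at hq
  have hsum2 : (∑ i : Fin n, q.1 i) + (∑ i : Fin n, q.2 i) = ∑ i : Fin n, v i := by
    rw [← Finset.sum_add_distrib]
    refine Finset.sum_congr rfl (fun i _ => ?_)
    have := congrArg (fun z => z i) hq
    simpa using this
  by_cases h1 : (∑ i : Fin n, q.1 i) < c
  · rw [hx _ h1, zero_mul]
  · rw [hy _ (by omega), mul_zero]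

lemma coeff_pow_eq_zero (x : MvPowerSeries (Fin n) K)
    (hx : MvPowerSeries.constantCoeff x = 0) (m : ℕ)
    (v : Fin n →₀ ℕ) (hv : (∑ i : Fin n, v i) < m) :
    MvPowerSeries.coeff v (x ^ m) = 0 := by
  induction m generalizing v with
  | zero => exact absurd hv (Nat.not_lt_zero _)
  | succ m ih =>
    rw [pow_succ]
    refine coeff_mul_eq_zero m 1 _ _ (fun w hw => ih w hw) ?_ v (by omega)
    intro w hw
    have hw0 : w = 0 := by
      ext i
      have h2 : (∑ i : Fin n, w i) = 0 := by omega
      simpa using Finset.sum_eq_zero_iff.mp h2 i (Finset.mem_univ i)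
    rw [hw0]
    simpa [MvPowerSeries.coeff_zero_eq_constantCoeff] using hx

lemma coeff_GG_eq_zero (h0 : ∀ i, MvPowerSeries.constantCoeff (g i) = 0)
    (a : Fin p → ℕ) (v : Fin n →₀ ℕ) (hv : (∑ i : Fin n, v i) < ∑ j : Fin p, a j) :
    MvPowerSeries.coeff v (GG g a) = 0 := by
  classical
  have main : ∀ s : Finset (Fin p), ∀ v : Fin n →₀ ℕ,
      (∑ i : Fin n, v i) < ∑ j ∈ s, a j →
      MvPowerSeries.coeff v (∏ j ∈ s, g j ^ a j) = 0 := by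
    intro s
    induction s using Finset.induction_on with
    | empty => intro v hv; simp at hv
    | @insert j s hj ih =>
      intro v hv
      rw [Finset.prod_insert hj]
      rw [Finset.sum_insert hj] at hv
      exact coeff_mul_eq_zero (a j) (∑ j ∈ s, a j) _ _
        (fun w hw => coeff_pow_eq_zero (g j) (h0 j) (a j) w hw) ih v hv
  exact main Finset.univ v hv

end Aux

/-- If `fᵢ = yᵢ + gᵢ` with `gᵢ ∈ K[[y_{p+1},…,yₙ]]`, `gᵢ(0) = 0`, and
`Σ μᵢ fᵢ = h` with `h ∈ K[[y_{p+1},…,yₙ]]`, then `h = 0`. -/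
theorem stmt_9 (K : Type) [Field K] (n p : ℕ) (hp : p ≤ n)
    (g : Fin p → MvPowerSeries (Fin n) K)
    (hlate : ∀ i, LateOnly K n p (g i))
    (h0 : ∀ i, MvPowerSeries.constantCoeff (g i) = 0)
    (μ : Fin p → MvPowerSeries (Fin n) K) (h : MvPowerSeries (Fin n) K)
    (hh : LateOnly K n p h)
    (hsum : (∑ i : Fin p, μ i * (MvPowerSeries.X (Fin.castLE hp i) + g i)) = h) :
    h = 0 := by
  classical
  apply MvPowerSeries.ext
  intro d
  rw [map_zero]
  set k : ℕ := (∑ i : Fin n, d i) + 1 with hk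
  have hpm := UU_pm hp g μ h hlate hh hsum k
  have hz : MvPowerSeries.coeff d (UU g μ h k) = 0 := by
    rw [UU, map_sum]
    refine Finset.sum_eq_zero (fun a ha => ?_)
    rw [Finset.Nat.mem_antidiagonalTuple] at ha
    refine coeff_mul_eq_zero 0 k _ _
      (fun w hw => absurd hw (Nat.not_lt_zero _))
      (fun w hw => coeff_GG_eq_zero g h0 a w (by rw [ha]; exact hw)) d (by omega)
  rcases hpm with he | he
  · rw [← he]
    exact hz
  · rw [he, map_neg, neg_eq_zero] at hz
    exact hz
end
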